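/- Let a and b be positive integers and let l = a mod b with 2 ≤ l ≤ b − 1. Then ⌊a/b⌋·(b−1)·b·(2b−1)/6 + ⌊b/l⌋²·(l−1)·l·(2l−1)/6 ≤ ∑_{m=0}^{a−1} ⌊m·b/a⌋² ≤ ⌊a/b⌋·(b−1)·b·(2b−1)/6 + ⌊b²·(l−1)·(2l−1)/(6l)⌋. -/

import Mathlib

open Finset

private lemma sum_odd' (n : ℕ) : ∑ k ∈ range n, (2*k+1) = n^2 := by
  induction n with
  | zero => simp
  | succ n ih => rw [sum_range_succ, ih]; ring

private lemma sq_layer' (n B : ℕ) (h : n < B) :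
    n^2 = ∑ k ∈ range B, if k < n then 2*k+1 else 0 := by
  rw [← Finset.sum_filter]
  have hf : (range B).filter (fun k => k < n) = range n := by
    ext x; simp only [mem_filter, mem_range]; omega
  rw [hf, sum_odd']

private lemma layer' (N B : ℕ) (g : ℕ → ℕ) (hg : ∀ m < N, g m < B) :
    ∑ m ∈ range N, (g m)^2
      = ∑ k ∈ range B, (2*k+1) * ((range N).filter (fun m => k < g m)).card := by
  have h1 : ∑ m ∈ range N, (g m)^2
      = ∑ m ∈ range N, ∑ k ∈ range B, if k < g m then 2*k+1 else 0 :=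
    Finset.sum_congr rfl fun m hm => sq_layer' _ _ (hg m (mem_range.1 hm))
  rw [h1, Finset.sum_comm]
  refine Finset.sum_congr rfl fun k _ => ?_
  rw [← Finset.sum_filter, Finset.sum_const, smul_eq_mul, mul_comm]

private lemma count' (A B k : ℕ) (hA : 0 < A) (hB : 0 < B) :
    ((range A).filter (fun m => k < m*B/A)).card = A - ((k+1)*A + B - 1)/B := by
  set c := ((k+1)*A + B - 1)/B with hc
  have key : ∀ m : ℕ, (k < m*B/A) ↔ c ≤ m := by
    intro m
    have h1 : k < m*B/A ↔ (k+1)*A ≤ m*B := by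
      rw [Nat.lt_iff_add_one_le, Nat.le_div_iff_mul_le hA]
    have h2 : m < c ↔ m*B < (k+1)*A := by
      rw [hc, Nat.lt_iff_add_one_le, Nat.le_div_iff_mul_le hB]
      have h3 : (m+1)*B = m*B + B := by ring
      omega
    omega
  have hf : (range A).filter (fun m => k < m*B/A) = Finset.Ico c A := by
    ext m
    simp only [mem_filter, mem_range, mem_Ico, key]
    omega
  rw [hf, Nat.card_Ico]

private lemma sum_sq_aux' (b : ℕ) :
    ∑ k ∈ range b, (2*k+1)*(b-(k+1)) = ∑ v ∈ range b, v^2 := by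
  induction b with
  | zero => simp
  | succ n ih =>
    rw [sum_range_succ, sum_range_succ (fun v => v^2)]
    have h1 : ∑ k ∈ range n, (2*k+1)*(n+1-(k+1))
        = ∑ k ∈ range n, ((2*k+1)*(n-(k+1)) + (2*k+1)) := by
      refine Finset.sum_congr rfl fun k hk => ?_
      have hk' : k < n := mem_range.1 hk
      have : n+1-(k+1) = (n-(k+1)) + 1 := by omega
      rw [this, Nat.mul_add, Nat.mul_one]
    rw [h1, Finset.sum_add_distrib, ih, sum_odd']
    simp

private lemma six_sum' (n : ℕ) : 6 * ∑ j ∈ range (n+1), j^2 = n*(n+1)*(2*n+1) := by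
  induction n with
  | zero => simp
  | succ n ih =>
    rw [sum_range_succ, Nat.mul_add, ih]
    ring

private lemma sum_sq_q' (n : ℕ) :
    (∑ v ∈ range n, ((v:ℚ))^2) = (n:ℚ)*((n:ℚ)-1)*(2*(n:ℚ)-1)/6 := by
  induction n with
  | zero => simp
  | succ n ih =>
    rw [sum_range_succ, ih]
    push_cast
    ring

private lemma key_identity (a b : ℕ) (ha : 0 < a) (hb : 0 < b) (hl : 0 < a % b) :
    ∑ m ∈ range a, (m*b/a)^2
      = (a/b) * ∑ v ∈ range b, v^2 + ∑ j ∈ range (a % b), (j*b/(a % b))^2 := by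
  set l := a % b with hldef
  set q := a / b with hqdef
  have hab : a = b*q + l := by rw [hqdef, hldef]; exact (Nat.div_add_mod a b).symm
  have hlb : l < b := Nat.mod_lt a hb
  -- layer-cake both sums
  have hg1 : ∀ m < a, m*b/a < b := by
    intro m hm
    rw [Nat.div_lt_iff_lt_mul ha, mul_comm b a]
    exact mul_lt_mul_of_pos_right hm hb
  have hg2 : ∀ j < l, j*b/l < b := by
    intro j hj
    rw [Nat.div_lt_iff_lt_mul hl, mul_comm b l]
    exact mul_lt_mul_of_pos_right hj hb
  rw [layer' a b _ hg1, layer' l b _ hg2]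
  have hcount1 : ∀ k ∈ range b,
      (2*k+1) * ((range a).filter (fun m => k < m*b/a)).card
        = (2*k+1) * ((b-(k+1))*q + (l - ((k+1)*l + b - 1)/b)) := by
    intro k hk
    have hkb : k < b := mem_range.1 hk
    rw [count' a b k ha hb]
    congr 1
    set D := ((k+1)*l + b - 1)/b with hD
    have hC : ((k+1)*a + b - 1)/b = (k+1)*q + D := by
      have h1 : (k+1)*a = (k+1)*l + b*((k+1)*q) := by rw [hab]; ring
      have h2 : (k+1)*a + b - 1 = ((k+1)*l + b - 1) + b*((k+1)*q) := by omega
      rw [h2, Nat.add_mul_div_left _ _ hb]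
      omega
    have hDl : D ≤ l := by
      rw [hD, Nat.div_le_iff_le_mul_add_pred hb]
      have : (k+1)*l ≤ b*l := Nat.mul_le_mul_right l (by omega)
      omega
    have hsplit : (k+1)*q + (b-(k+1))*q = b*q := by
      rw [← Nat.add_mul]
      congr 1
      omega
    rw [hC]
    omega
  rw [Finset.sum_congr rfl hcount1]
  have hcount2 : ∀ k ∈ range b,
      (2*k+1) * ((range l).filter (fun m => k < m*b/l)).card
        = (2*k+1) * (l - ((k+1)*l + b - 1)/b) := by
    intro k hk
    rw [count' l b k hl hb]
  rw [Finset.sum_congr rfl hcount2]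
  have hmul : ∀ k ∈ range b,
      (2*k+1) * ((b-(k+1))*q + (l - ((k+1)*l + b - 1)/b))
        = ((2*k+1)*(b-(k+1)))*q + (2*k+1)*(l - ((k+1)*l + b - 1)/b) := by
    intro k _; ring
  rw [Finset.sum_congr rfl hmul, Finset.sum_add_distrib, ← Finset.sum_mul,
    sum_sq_aux', mul_comm]

theorem aM2_bounds (a b : ℕ) (ha : 0 < a) (hb : 0 < b)
    (l : ℕ) (hl : l = a % b) (h2 : 2 ≤ l) (hlb : l ≤ b - 1) :
    ((a / b : ℕ) : ℚ) * ((b : ℚ) - 1) * (b : ℚ) * (2 * (b : ℚ) - 1) / 6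
        + ((b / l : ℕ) : ℚ) ^ 2 * ((l : ℚ) - 1) * (l : ℚ) * (2 * (l : ℚ) - 1) / 6
      ≤ ∑ m ∈ Finset.range a, ((m * b / a : ℕ) : ℚ) ^ 2
    ∧ ∑ m ∈ Finset.range a, ((m * b / a : ℕ) : ℚ) ^ 2
      ≤ ((a / b : ℕ) : ℚ) * ((b : ℚ) - 1) * (b : ℚ) * (2 * (b : ℚ) - 1) / 6
        + ((b ^ 2 * (l - 1) * (2 * l - 1) / (6 * l) : ℕ) : ℚ) := by
  have hl0 : 0 < l := by omega
  have hlmod : a % b = l := hl.symm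
  have key := key_identity a b ha hb (by rw [hlmod]; exact hl0)
  rw [hlmod] at key
  set S : ℕ := ∑ m ∈ range a, (m*b/a)^2 with hSdef
  set T : ℕ := ∑ v ∈ range b, v^2 with hTdef
  set R : ℕ := ∑ j ∈ range l, (j*b/l)^2 with hRdef
  have hcastS : ∑ m ∈ Finset.range a, ((m * b / a : ℕ) : ℚ) ^ 2 = (S:ℚ) := by
    rw [hSdef]; push_cast; rfl
  have hT : (T:ℚ) = (b:ℚ)*((b:ℚ)-1)*(2*(b:ℚ)-1)/6 := by
    rw [hTdef]; push_cast; exact sum_sq_q' b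
  have hmain : ((a / b : ℕ) : ℚ) * ((b : ℚ) - 1) * (b : ℚ) * (2 * (b : ℚ) - 1) / 6
      = ((a/b:ℕ):ℚ) * (T:ℚ) := by rw [hT]; ring
  have hS : (S:ℚ) = ((a/b:ℕ):ℚ) * (T:ℚ) + (R:ℚ) := by
    have := congrArg (Nat.cast : ℕ → ℚ) key
    push_cast at this
    exact this
  have hlow : ((b / l : ℕ) : ℚ) ^ 2 * ((l : ℚ) - 1) * (l : ℚ) * (2 * (l : ℚ) - 1) / 6
      ≤ (R:ℚ) := by
    have h1 : ∀ j ∈ range l, ((j:ℚ)*((b/l:ℕ):ℚ))^2 ≤ ((j*b/l : ℕ):ℚ)^2 := by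
      intro j _
      have h := Nat.pow_le_pow_left (Nat.mul_div_le_mul_div_assoc j b l) 2
      push_cast at h ⊢
      exact_mod_cast h
    have h2 : (∑ j ∈ range l, ((j:ℚ)*((b/l:ℕ):ℚ))^2) ≤ (R:ℚ) := by
      rw [hRdef]
      push_cast
      exact Finset.sum_le_sum h1
    calc ((b / l : ℕ) : ℚ) ^ 2 * ((l : ℚ) - 1) * (l : ℚ) * (2 * (l : ℚ) - 1) / 6
        = ((b/l:ℕ):ℚ)^2 * ∑ j ∈ range l, (j:ℚ)^2 := by rw [sum_sq_q' l]; ring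
      _ = ∑ j ∈ range l, ((j:ℚ)*((b/l:ℕ):ℚ))^2 := by
          rw [Finset.mul_sum]
          exact Finset.sum_congr rfl fun j _ => by ring
      _ ≤ (R:ℚ) := h2
  have hub_nat : R ≤ b^2*(l-1)*(2*l-1)/(6*l) := by
    rw [Nat.le_div_iff_mul_le (by omega : 0 < 6*l)]
    have h1 : R * l^2 ≤ (∑ j ∈ range l, j^2) * b^2 := by
      rw [hRdef, Finset.sum_mul, Finset.sum_mul]
      refine Finset.sum_le_sum fun j _ => ?_
      have h := Nat.div_mul_le_self (j*b) l
      calc (j*b/l)^2 * l^2 = (j*b/l*l)^2 := by ring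
        _ ≤ (j*b)^2 := Nat.pow_le_pow_left h 2
        _ = j^2*b^2 := by ring
    have h6 : 6 * ∑ j ∈ range l, j^2 = (l-1)*l*(2*l-1) := by
      obtain ⟨n, rfl⟩ : ∃ n, l = n+1 := ⟨l-1, by omega⟩
      rw [show n+1-1 = n from rfl, show 2*(n+1)-1 = 2*n+1 from by omega]
      exact six_sum' n
    have h2 : R*(6*l)*l ≤ (b^2*(l-1)*(2*l-1))*l := by
      calc R*(6*l)*l = 6*(R*l^2) := by ring
        _ ≤ 6*((∑ j ∈ range l, j^2)*b^2) := Nat.mul_le_mul_left 6 h1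
        _ = b^2*(6*∑ j ∈ range l, j^2) := by ring
        _ = b^2*((l-1)*l*(2*l-1)) := by rw [h6]
        _ = (b^2*(l-1)*(2*l-1))*l := by ring
    exact Nat.le_of_mul_le_mul_right h2 hl0
  have hub : (R:ℚ) ≤ ((b^2*(l-1)*(2*l-1)/(6*l) : ℕ):ℚ) := Nat.cast_le.2 hub_nat
  constructor
  · rw [hcastS, hS, hmain]
    exact add_le_add_right hlow _
  · rw [hcastS, hS, hmain]
    exact add_le_add_right hub _
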